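/- Let G and M be standard Borel spaces and ν a Borel probability measure on G. Let μ be a Borel probability measure on G^ℤ × M such that: (i) the pushforward of μ under the map π₊ : (ξ, x) ↦ (ξ(n))_{n ≥ 0} is the product measure ν^ℕ on G^ℕ; and (ii) the σ-algebra generated by π₊ is independent, with respect to μ, of the σ-algebra 𝓕 generated by the map (ξ, x) ↦ ((ξ(n))_{n < 0}, x). Let 𝓖 denote the σ-algebra generated by the map (ξ, x) ↦ ((ξ(n))_{n ≥ 0}, x). Then every measurable set A ⊆ G^ℤ × M that coincides μ-almost everywhere with a set in 𝓕 and also coincides μ-almost everywhere with a set in 𝓖 coincides μ-almost everywhere with a set of the form G^ℤ × Ã for some measurable Ã ⊆ M. -/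

import Mathlib

open MeasureTheory

/-- Let `G`, `M` be standard Borel spaces and `ν` a Borel probability measure
on `G`.  Let `μ` be a Borel probability measure on `G^ℤ × M` such that (i) the pushforward of
`μ` under `π₊ : (ξ, x) ↦ (ξ n)_{n ≥ 0}` is the product measure `ν^ℕ` (characterized on
cylinders), and (ii) the σ-algebra generated by `π₊` is independent of the σ-algebra `𝓕`
generated by `(ξ, x) ↦ ((ξ n)_{n < 0}, x)`.  Let `𝓖` be the σ-algebra generated by
`(ξ, x) ↦ ((ξ n)_{n ≥ 0}, x)`.  Then every measurable set `A` coinciding `μ`-a.e. with a set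
in `𝓕` and `μ`-a.e. with a set in `𝓖` coincides `μ`-a.e. with `G^ℤ × Ã` for some measurable
`Ã ⊆ M`. -/
theorem mem_hopf_intersection_iff_product
    {G M : Type*} [MeasurableSpace G] [StandardBorelSpace G]
    [MeasurableSpace M] [StandardBorelSpace M]
    (ν : Measure G) [IsProbabilityMeasure ν]
    (PN : Measure (ℕ → G)) [IsProbabilityMeasure PN]
    (hPN : ∀ (s : Finset ℕ) (C : ℕ → Set G), (∀ i, MeasurableSet (C i)) →
      PN {ω | ∀ i ∈ s, ω i ∈ C i} = ∏ i ∈ s, ν (C i))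
    (μ : Measure ((ℤ → G) × M)) [IsProbabilityMeasure μ]
    (hproj : Measure.map (fun p : (ℤ → G) × M => (fun n : ℕ => p.1 (n : ℤ))) μ = PN)
    (hindep : ProbabilityTheory.Indep
      (MeasurableSpace.comap (fun p : (ℤ → G) × M => (fun n : ℕ => p.1 (n : ℤ)))
        (inferInstance : MeasurableSpace (ℕ → G)))
      (MeasurableSpace.comap
        (fun p : (ℤ → G) × M => ((fun n : ℕ => p.1 (-(n : ℤ) - 1)), p.2))
        (inferInstance : MeasurableSpace ((ℕ → G) × M))) μ)
    (A : Set ((ℤ → G) × M)) (hA : MeasurableSet A)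
    (hAF : ∃ B : Set ((ℤ → G) × M),
      MeasurableSet[MeasurableSpace.comap
        (fun p : (ℤ → G) × M => ((fun n : ℕ => p.1 (-(n : ℤ) - 1)), p.2))
        (inferInstance : MeasurableSpace ((ℕ → G) × M))] B ∧
      μ (symmDiff A B) = 0)
    (hAG : ∃ C : Set ((ℤ → G) × M),
      MeasurableSet[MeasurableSpace.comap
        (fun p : (ℤ → G) × M => ((fun n : ℕ => p.1 (n : ℤ)), p.2))
        (inferInstance : MeasurableSpace ((ℕ → G) × M))] C ∧
      μ (symmDiff A C) = 0) :
    ∃ Atil : Set M, MeasurableSet Atil ∧ μ (symmDiff A (Set.univ ×ˢ Atil)) = 0 := by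

  classical
  -- Notation for the three projection maps.
  have hπm : Measurable (fun p : (ℤ → G) × M => fun n : ℕ => p.1 (n : ℤ)) := by fun_prop
  have hFm : Measurable (fun p : (ℤ → G) × M =>
      ((fun n : ℕ => p.1 (-(n : ℤ) - 1)), p.2)) := by fun_prop
  have hhm : Measurable (fun q : (ℕ → G) × ((ℕ → G) × M) => (q.1, q.2.2)) := by fun_prop
  set π : ((ℤ → G) × M) → (ℕ → G) := fun p => fun n : ℕ => p.1 (n : ℤ) with hπdef
  set F : ((ℤ → G) × M) → ((ℕ → G) × M) :=
    fun p => ((fun n : ℕ => p.1 (-(n : ℤ) - 1)), p.2) with hFdef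
  set Ψ : ((ℤ → G) × M) → ((ℕ → G) × ((ℕ → G) × M)) := fun p => (π p, F p) with hΨdef
  have hΨm : Measurable Ψ := hπm.prod hFm
  -- marginals
  set P₁ : Measure (ℕ → G) := μ.map π with hP₁def
  set P₂ : Measure ((ℕ → G) × M) := μ.map F with hP₂def
  haveI : IsProbabilityMeasure P₁ := Measure.isProbabilityMeasure_map hπm.aemeasurable
  haveI : IsProbabilityMeasure P₂ := Measure.isProbabilityMeasure_map hFm.aemeasurable
  -- the pushforward under Ψ is the product of the marginals, by independence
  have hprod : P₁.prod P₂ = μ.map Ψ := by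
    refine Measure.prod_eq ?_
    intro s t hs ht
    rw [Measure.map_apply hΨm (hs.prod ht), Measure.map_apply hπm hs,
      Measure.map_apply hFm ht]
    have hpre : Ψ ⁻¹' (s ×ˢ t) = π ⁻¹' s ∩ F ⁻¹' t := rfl
    rw [hpre]
    exact (ProbabilityTheory.Indep_iff _ _ μ).1 hindep _ _ ⟨s, hs, rfl⟩ ⟨t, ht, rfl⟩
  -- unpack the two approximating sets
  obtain ⟨B, hBmeas, hAB⟩ := hAF
  obtain ⟨C, hCmeas, hAC⟩ := hAG
  obtain ⟨B', hB', rfl⟩ := hBmeas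
  obtain ⟨C', hC', rfl⟩ := hCmeas
  -- μ (B Δ C) = 0
  have hBC : μ (symmDiff (F ⁻¹' B') ((fun p : (ℤ → G) × M =>
      ((fun n : ℕ => p.1 (n : ℤ)), p.2)) ⁻¹' C')) = 0 := by
    have hsub : symmDiff (F ⁻¹' B') ((fun p : (ℤ → G) × M =>
        ((fun n : ℕ => p.1 (n : ℤ)), p.2)) ⁻¹' C') ⊆
        symmDiff A (F ⁻¹' B') ∪ symmDiff A ((fun p : (ℤ → G) × M =>
        ((fun n : ℕ => p.1 (n : ℤ)), p.2)) ⁻¹' C') := by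
      have := symmDiff_triangle (F ⁻¹' B') A ((fun p : (ℤ → G) × M =>
        ((fun n : ℕ => p.1 (n : ℤ)), p.2)) ⁻¹' C')
      intro x hx
      rcases this hx with h | h
      · exact Or.inl (by rwa [symmDiff_comm] at h)
      · exact Or.inr h
    refine le_antisymm ?_ zero_le
    calc μ _ ≤ μ (symmDiff A (F ⁻¹' B') ∪ symmDiff A ((fun p : (ℤ → G) × M =>
        ((fun n : ℕ => p.1 (n : ℤ)), p.2)) ⁻¹' C')) := measure_mono hsub
      _ ≤ μ (symmDiff A (F ⁻¹' B')) + μ (symmDiff A ((fun p : (ℤ → G) × M =>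
        ((fun n : ℕ => p.1 (n : ℤ)), p.2)) ⁻¹' C')) := measure_union_le _ _
      _ = 0 := by rw [hAB, hAC, add_zero]
  -- express B Δ C as Ψ-preimage of a set S in the product space
  set h : ((ℕ → G) × ((ℕ → G) × M)) → ((ℕ → G) × M) := fun q => (q.1, q.2.2) with hhdef
  set S : Set ((ℕ → G) × ((ℕ → G) × M)) :=
    symmDiff ((Set.univ : Set (ℕ → G)) ×ˢ B') (h ⁻¹' C') with hSdef
  have hSm : MeasurableSet S :=
    (MeasurableSet.univ.prod hB').symmDiff (hhm hC')
  have hΨS : Ψ ⁻¹' S = symmDiff (F ⁻¹' B') ((fun p : (ℤ → G) × M =>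
      ((fun n : ℕ => p.1 (n : ℤ)), p.2)) ⁻¹' C') := by
    ext p
    simp [hSdef, Set.symmDiff_def, hΨdef, hhdef, hπdef, hFdef]
  have hS0 : (P₁.prod P₂) S = 0 := by
    rw [hprod, Measure.map_apply hΨm hSm, hΨS]
    exact hBC
  -- choose a good fiber a₀
  have hae : (fun a => P₂ (Prod.mk a ⁻¹' S)) =ᵐ[P₁] 0 :=
    (Measure.measure_prod_null hSm).1 hS0
  have hne : P₁ ≠ 0 := IsProbabilityMeasure.ne_zero P₁
  haveI : (ae P₁).NeBot := ae_neBot.mpr hne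
  obtain ⟨a₀, ha₀⟩ := hae.exists
  -- define Atil as the section of C'
  refine ⟨{x : M | (a₀, x) ∈ C'}, hC'.preimage (measurable_prodMk_left), ?_⟩
  set Atil : Set M := {x : M | (a₀, x) ∈ C'} with hAtildef
  have hAtil : MeasurableSet Atil := hC'.preimage (measurable_prodMk_left)
  -- the fiber of S over a₀ is B' Δ (univ ×ˢ Atil)
  have hsec : Prod.mk a₀ ⁻¹' S =
      symmDiff B' ((Set.univ : Set (ℕ → G)) ×ˢ Atil) := by
    ext q
    simp [hSdef, Set.symmDiff_def, hhdef, hAtildef]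
  have hP₂0 : P₂ (symmDiff B' ((Set.univ : Set (ℕ → G)) ×ˢ Atil)) = 0 := by
    rw [← hsec]
    simpa using ha₀
  -- pull back along F
  have hpreF : F ⁻¹' (symmDiff B' ((Set.univ : Set (ℕ → G)) ×ˢ Atil)) =
      symmDiff (F ⁻¹' B') ((Set.univ : Set (ℤ → G)) ×ˢ Atil) := by
    ext p
    simp [Set.symmDiff_def, hFdef]
  have hμB : μ (symmDiff (F ⁻¹' B') ((Set.univ : Set (ℤ → G)) ×ˢ Atil)) = 0 := by
    rw [← hpreF, ← Measure.map_apply hFm (hB'.symmDiff (MeasurableSet.univ.prod hAtil))]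
    exact hP₂0
  -- conclude with the triangle inequality
  have hsub : symmDiff A ((Set.univ : Set (ℤ → G)) ×ˢ Atil) ⊆
      symmDiff A (F ⁻¹' B') ∪ symmDiff (F ⁻¹' B') ((Set.univ : Set (ℤ → G)) ×ˢ Atil) :=
    symmDiff_triangle A (F ⁻¹' B') _
  refine le_antisymm ?_ zero_le
  calc μ _ ≤ μ (symmDiff A (F ⁻¹' B') ∪
      symmDiff (F ⁻¹' B') ((Set.univ : Set (ℤ → G)) ×ˢ Atil)) := measure_mono hsub
    _ ≤ μ (symmDiff A (F ⁻¹' B')) +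
      μ (symmDiff (F ⁻¹' B') ((Set.univ : Set (ℤ → G)) ×ˢ Atil)) := measure_union_le _ _
    _ = 0 := by rw [hAB, hμB, add_zero]
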